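/- Let ⊥ be an orthogonality relation on X with bornology of ⊥-bounded sets. If f : X → ℂ ⊥-tends to 0 at infinity (i.e., for every ε > 0 the set {x : |f(x)| ≥ ε} is ⊥-bounded), then f is ⊥-continuous with respect to metric separation orthogonality on ℂ. -/

import Mathlib

theorem stmt_16 {X : Type*} (perp : Set X → Set X → Prop)
    (hsymm : ∀ A B : Set X, perp A B → perp B A)
    (hzero : perp ∅ Set.univ)
    (hunion : ∀ A C C' : Set X, perp A (C ∪ C') ↔ (perp A C ∧ perp A C'))
    (f : X → ℂ)
    (htends : ∀ ε > (0 : ℝ), perp {x : X | ε ≤ ‖f x‖} Set.univ) :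
    ∀ A D : Set ℂ, (∃ ε > (0 : ℝ), ∀ z₁ ∈ A, ∀ z₂ ∈ D, ε ≤ ‖z₁ - z₂‖) →
      perp (f ⁻¹' A) (f ⁻¹' D) := by
  intro A D ⟨ε, hε, hsep⟩
  -- monotonicity: if perp C B' and B ⊆ B' then perp C B
  have mono : ∀ C B B' : Set X, B ⊆ B' → perp C B' → perp C B := by
    intro C B B' hBB' h
    have : B ∪ B' = B' := Set.union_eq_self_of_subset_left hBB'
    rw [← this] at h
    exact ((hunion C B B').mp h).1
  -- a set perp to univ is perp to everything
  have bperp : ∀ B C : Set X, perp B C → ∀ S : Set X, perp S C → perp B S → True := by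
    intro _ _ _ _ _ _; trivial
  have key : ∀ B S : Set X, perp B Set.univ → perp B S := fun B S h =>
    mono B S Set.univ (Set.subset_univ S) h
  have hε2 : (0:ℝ) < ε / 2 := by linarith
  by_cases hA : ∀ a ∈ A, ε / 2 ≤ ‖a‖
  · -- f ⁻¹' A is bounded
    have h1 : f ⁻¹' A ⊆ {x : X | ε / 2 ≤ ‖f x‖} := fun x hx => hA _ hx
    have h2 := htends (ε/2) hε2
    exact hsymm _ _ (mono (f ⁻¹' D) _ _ h1 (hsymm _ _ (key _ _ h2)))
  · push_neg at hA
    obtain ⟨a, ha, haε⟩ := hA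
    have hD : ∀ d ∈ D, ε / 2 ≤ ‖d‖ := by
      intro d hd
      by_contra hc
      push_neg at hc
      have := hsep a ha d hd
      have : ‖a - d‖ ≤ ‖a‖ + ‖d‖ := by
        simpa using norm_sub_le a d
      linarith [hsep a ha d hd]
    have h1 : f ⁻¹' D ⊆ {x : X | ε / 2 ≤ ‖f x‖} := fun x hx => hD _ hx
    have h2 := htends (ε/2) hε2
    exact mono (f ⁻¹' A) _ _ h1 (hsymm _ _ (key _ _ h2))
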